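/- Let n ≥ 6. Let N be the square matrix with rational entries whose rows and columns are both indexed by the 4-element subsets of {1,…,n}, with entry N(I, I′) = min{0, 2 − |(I ∖ {n}) ∩ I′|} for 4-element subsets I, I′ of {1,…,n}. Then det N = (−1)^{C(n−1,3)} · 2^{C(n−1,4)}, where C(m,k) denotes the binomial coefficient. In particular N is invertible. -/

import Mathlib

open Finset

section KeelAux
open Matrix
variable {n : ℕ}

private def KM (z : Fin n) : Matrix {I : Finset (Fin n) // I.card = 4} {I : Finset (Fin n) // I.card = 4} ℚ :=
  Matrix.of fun I I' => min (0 : ℚ) (2 - (((I.1.erase z) ∩ I'.1).card : ℚ))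

private def KE (z : Fin n) : Matrix {I : Finset (Fin n) // I.card = 4} {I : Finset (Fin n) // I.card = 4} ℚ :=
  Matrix.of fun I K => if I = K then 1 else
    if z ∉ I.1 ∧ z ∈ K.1 ∧ K.1.erase z ⊆ I.1 then -1 else 0

private lemma KM_mem (z : Fin n) (I I' : {I : Finset (Fin n) // I.card = 4}) (hI : z ∈ I.1) :
    KM z I I' = if I.1.erase z ⊆ I'.1 then -1 else 0 := by
  have hc3 : (I.1.erase z).card = 3 := by rw [card_erase_of_mem hI, I.2]
  simp only [KM, Matrix.of_apply]
  by_cases h : I.1.erase z ⊆ I'.1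
  · have he : I.1.erase z ∩ I'.1 = I.1.erase z := inter_eq_left.mpr h
    rw [he, hc3, if_pos h]
    norm_num
  · have hle : ((I.1.erase z) ∩ I'.1).card ≤ 2 := by
      by_contra hlt
      push_neg at hlt
      have heq := eq_of_subset_of_card_le
        (inter_subset_left : I.1.erase z ∩ I'.1 ⊆ I.1.erase z) (by omega)
      exact h (by rw [← heq]; exact inter_subset_right)
    rw [if_neg h]
    have : ((I.1.erase z ∩ I'.1).card : ℚ) ≤ 2 := by exact_mod_cast hle
    exact min_eq_left (by linarith)

private lemma KM_mem_mem (z : Fin n) (I I' : {I : Finset (Fin n) // I.card = 4})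
    (hI : z ∈ I.1) (hI' : z ∈ I'.1) :
    KM z I I' = if I = I' then -1 else 0 := by
  rw [KM_mem z I I' hI]
  congr 1
  apply propext
  constructor
  · intro h
    have : I.1 ⊆ I'.1 := by
      intro x hx
      by_cases hxz : x = z
      · subst hxz; exact hI'
      · exact h (mem_erase.mpr ⟨hxz, hx⟩)
    exact Subtype.ext (eq_of_subset_of_card_le this (by rw [I.2, I'.2]))
  · rintro rfl; exact erase_subset _ _

private lemma KE_mul_KM (z : Fin n) (I I' : {I : Finset (Fin n) // I.card = 4}) :
    (KE z * KM z) I I' =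
      if z ∈ I.1 then KM z I I' else (if I = I' then 2 else 0) := by
  rw [Matrix.mul_apply]
  by_cases hz : z ∈ I.1
  · rw [if_pos hz]
    have hKE : ∀ K, KE z I K = if I = K then (1:ℚ) else 0 := by
      intro K; simp only [KE, Matrix.of_apply]
      split_ifs with h1 h2
      · rfl
      · exact absurd hz h2.1
      · rfl
    simp only [hKE, ite_mul, one_mul, zero_mul]
    rw [Finset.sum_ite_eq]
    simp
  · rw [if_neg hz]
    have hKE : ∀ K, KE z I K = (if I = K then (1:ℚ) else 0)
        + (if z ∈ K.1 ∧ K.1.erase z ⊆ I.1 then -1 else 0) := by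
      intro K
      simp only [KE, Matrix.of_apply]
      by_cases h1 : I = K
      · subst h1
        rw [if_pos rfl, if_pos rfl,
          if_neg (show ¬(z ∈ I.1 ∧ I.1.erase z ⊆ I.1) from fun h => hz h.1), add_zero]
      · rw [if_neg h1, if_neg h1, zero_add]
        by_cases h2 : z ∈ K.1 ∧ K.1.erase z ⊆ I.1
        · rw [if_pos ⟨hz, h2⟩, if_pos h2]
        · rw [if_neg (show ¬(z ∉ I.1 ∧ z ∈ K.1 ∧ K.1.erase z ⊆ I.1) from fun h => h2 h.2),
            if_neg h2]
    simp only [hKE, add_mul, Finset.sum_add_distrib, ite_mul, one_mul, zero_mul]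
    rw [Finset.sum_ite_eq]
    simp only [Finset.mem_univ, if_true]
    have hbij : ∑ K : {I : Finset (Fin n) // I.card = 4},
        (if z ∈ K.1 ∧ K.1.erase z ⊆ I.1 then (-1:ℚ) * KM z K I' else 0)
        = ∑ J ∈ powersetCard 3 I.1, (if J ⊆ I'.1 then (1:ℚ) else 0) := by
      rw [← Finset.sum_filter_add_sum_filter_not Finset.univ
        (fun K => z ∈ K.1 ∧ K.1.erase z ⊆ I.1)]
      have h2 : ∑ K ∈ Finset.univ.filter (fun K : {I : Finset (Fin n) // I.card = 4} =>
          ¬(z ∈ K.1 ∧ K.1.erase z ⊆ I.1)),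
          (if z ∈ K.1 ∧ K.1.erase z ⊆ I.1 then (-1:ℚ) * KM z K I' else 0) = 0 := by
        apply Finset.sum_eq_zero
        intro K hK
        simp only [Finset.mem_filter] at hK
        rw [if_neg hK.2]
      rw [h2, add_zero]
      refine Finset.sum_bij' (fun K _ => K.1.erase z)
        (fun J hJ => (⟨insert z J, ?_⟩ : {I : Finset (Fin n) // I.card = 4}))
        ?_ ?_ ?_ ?_ ?_
      · simp only [Finset.mem_powersetCard] at hJ
        have hzJ : z ∉ J := fun h => hz (hJ.1 h)
        rw [card_insert_of_notMem hzJ, hJ.2]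
      · intro K hK
        simp only [Finset.mem_filter, Finset.mem_univ, true_and] at hK
        simp only [Finset.mem_powersetCard]
        exact ⟨hK.2, by rw [card_erase_of_mem hK.1, K.2]⟩
      · intro J hJ
        simp only [Finset.mem_powersetCard] at hJ
        have hzJ : z ∉ J := fun h => hz (hJ.1 h)
        simp only [Finset.mem_filter, Finset.mem_univ, true_and]
        refine ⟨Finset.mem_insert_self _ _, ?_⟩
        rw [Finset.erase_insert hzJ]
        exact hJ.1
      · intro K hK
        simp only [Finset.mem_filter, Finset.mem_univ, true_and] at hK
        exact Subtype.ext (Finset.insert_erase hK.1)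
      · intro J hJ
        simp only [Finset.mem_powersetCard] at hJ
        exact Finset.erase_insert (fun h => hz (hJ.1 h))
      · intro K hK
        simp only [Finset.mem_filter, Finset.mem_univ, true_and] at hK
        rw [if_pos hK, KM_mem z K I' hK.1]
        split_ifs <;> ring
    rw [hbij]
    have hsum : ∑ J ∈ powersetCard 3 I.1, (if J ⊆ I'.1 then (1:ℚ) else 0)
        = (((I.1 ∩ I'.1).card.choose 3 : ℕ) : ℚ) := by
      rw [Finset.sum_ite, Finset.sum_const, Finset.sum_const_zero]
      have hfil : (powersetCard 3 I.1).filter (fun J => J ⊆ I'.1)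
          = powersetCard 3 (I.1 ∩ I'.1) := by
        ext J
        simp only [mem_filter, mem_powersetCard, subset_inter_iff]
        tauto
      rw [hfil, card_powersetCard]
      simp
    rw [hsum]
    have herase : I.1.erase z = I.1 := erase_eq_of_notMem hz
    set c := (I.1 ∩ I'.1).card with hc
    have hKMval : KM z I I' = min (0:ℚ) (2 - (c:ℚ)) := by
      simp only [KM, Matrix.of_apply, herase, hc]
    have hcle : c ≤ 4 := le_trans (card_le_card inter_subset_left) (le_of_eq I.2)
    have hiff : I = I' ↔ c = 4 := by
      constructor
      · rintro rfl; rw [hc, inter_self, I.2]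
      · intro h4
        have hIc : I.1 ∩ I'.1 = I.1 := eq_of_subset_of_card_le inter_subset_left
          (by rw [I.2, ← hc, h4])
        have hsub : I.1 ⊆ I'.1 := by rw [← hIc]; exact inter_subset_right
        exact Subtype.ext (eq_of_subset_of_card_le hsub (by rw [I.2, I'.2]))
    have key : min (0:ℚ) (2 - (c:ℚ)) + (c.choose 3 : ℚ) = if c = 4 then 2 else 0 := by
      interval_cases c <;> simp [Nat.choose] <;> norm_num
    rw [hKMval, if_congr hiff rfl rfl]
    exact key

private lemma KE_det (z : Fin n) : (KE z).det = 1 := by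
  classical
  let e := Equiv.sumCompl (fun I : {I : Finset (Fin n) // I.card = 4} => z ∈ I.1)
  rw [← Matrix.det_submatrix_equiv_self e]
  have hsub : (KE z).submatrix e e = Matrix.fromBlocks 1 0
      (Matrix.of fun I K => KE z (e (Sum.inr I)) (e (Sum.inl K))) 1 := by
    ext i j
    cases i with
    | inl I =>
      cases j with
      | inl K =>
        simp only [Matrix.submatrix_apply, Matrix.fromBlocks_apply₁₁, e,
          Equiv.sumCompl_apply_inl, KE, Matrix.of_apply, Matrix.one_apply,
          Subtype.coe_inj]
        by_cases hIK : I = K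
        · simp [hIK]
        · rw [if_neg hIK, if_neg hIK, if_neg (fun h => h.1 I.2)]
      | inr K =>
        simp only [Matrix.submatrix_apply, Matrix.fromBlocks_apply₁₂, e,
          Equiv.sumCompl_apply_inl, Equiv.sumCompl_apply_inr, KE, Matrix.of_apply,
          Matrix.zero_apply]
        have hne : (I : {I : Finset (Fin n) // I.card = 4}) ≠ (K : {I : Finset (Fin n) // I.card = 4}) :=
          fun h => K.2 (h ▸ I.2)
        rw [if_neg hne, if_neg (fun h => h.1 I.2)]
    | inr I =>
      cases j with
      | inl K => rfl
      | inr K =>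
        simp only [Matrix.submatrix_apply, Matrix.fromBlocks_apply₂₂, e,
          Equiv.sumCompl_apply_inr, KE, Matrix.of_apply, Matrix.one_apply,
          Subtype.coe_inj]
        by_cases hIK : I = K
        · simp [hIK]
        · rw [if_neg hIK, if_neg hIK, if_neg (fun h => K.2 h.2.1)]
  rw [hsub, Matrix.det_fromBlocks_zero₁₂, Matrix.det_one, Matrix.det_one, mul_one]

private lemma KEKM_det (z : Fin n) :
    (KE z * KM z).det =
      (-1) ^ (Fintype.card {I : {I : Finset (Fin n) // I.card = 4} // z ∈ I.1})
        * 2 ^ (Fintype.card {I : {I : Finset (Fin n) // I.card = 4} // z ∉ I.1}) := by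
  classical
  let e := Equiv.sumCompl (fun I : {I : Finset (Fin n) // I.card = 4} => z ∈ I.1)
  rw [← Matrix.det_submatrix_equiv_self e]
  have hsub : (KE z * KM z).submatrix e e = Matrix.fromBlocks ((-1 : ℚ) • 1)
      (Matrix.of fun I K => (KE z * KM z) (e (Sum.inl I)) (e (Sum.inr K))) 0 ((2 : ℚ) • 1) := by
    ext i j
    cases i with
    | inl I =>
      cases j with
      | inl K =>
        simp only [Matrix.submatrix_apply, Matrix.fromBlocks_apply₁₁, e,
          Equiv.sumCompl_apply_inl, Matrix.smul_apply, Matrix.one_apply, smul_eq_mul]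
        rw [KE_mul_KM, if_pos I.2, KM_mem_mem z _ _ I.2 K.2]
        simp only [Subtype.coe_inj]
        by_cases hIK : I = K <;> simp [hIK]
      | inr K => rfl
    | inr I =>
      cases j with
      | inl K =>
        simp only [Matrix.submatrix_apply, Matrix.fromBlocks_apply₂₁, e,
          Equiv.sumCompl_apply_inl, Equiv.sumCompl_apply_inr, Matrix.zero_apply]
        rw [KE_mul_KM, if_neg I.2,
          if_neg (show ¬((I : {I : Finset (Fin n) // I.card = 4}) = (K : {I : Finset (Fin n) // I.card = 4})) from
            fun h => I.2 (h ▸ K.2))]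
      | inr K =>
        simp only [Matrix.submatrix_apply, Matrix.fromBlocks_apply₂₂, e,
          Equiv.sumCompl_apply_inr, Matrix.smul_apply, Matrix.one_apply, smul_eq_mul]
        rw [KE_mul_KM, if_neg I.2]
        simp only [Subtype.coe_inj]
        by_cases hIK : I = K <;> simp [hIK]
  rw [hsub, Matrix.det_fromBlocks_zero₂₁, Matrix.det_smul, Matrix.det_smul,
    Matrix.det_one, Matrix.det_one, mul_one, mul_one]

private lemma card_KIdx_mem (z : Fin n) :
    Fintype.card {I : {I : Finset (Fin n) // I.card = 4} // z ∈ I.1} = (n - 1).choose 3 := by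
  classical
  have hcongr : Fintype.card {I : {I : Finset (Fin n) // I.card = 4} // z ∈ I.1}
      = Fintype.card {x // x ∈ powersetCard 3 ((univ : Finset (Fin n)).erase z)} := by
    apply Fintype.card_congr
    refine ⟨fun I => ⟨I.1.1.erase z, ?_⟩, fun J => ⟨⟨insert z J.1, ?_⟩, mem_insert_self _ _⟩,
      ?_, ?_⟩
    · rw [mem_powersetCard]
      exact ⟨erase_subset_erase z (subset_univ _), by rw [card_erase_of_mem I.2, I.1.2]⟩
    · have hJ := mem_powersetCard.mp J.2
      have hzJ : z ∉ J.1 := fun h => (notMem_erase z univ) (hJ.1 h)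
      rw [card_insert_of_notMem hzJ, hJ.2]
    · intro I
      exact Subtype.ext (Subtype.ext (insert_erase I.2))
    · intro J
      have hJ := mem_powersetCard.mp J.2
      have hzJ : z ∉ J.1 := fun h => (notMem_erase z univ) (hJ.1 h)
      exact Subtype.ext (erase_insert hzJ)
  rw [hcongr, Fintype.card_coe, card_powersetCard, card_erase_of_mem (mem_univ z),
    card_univ, Fintype.card_fin]

private lemma card_KIdx_not_mem (z : Fin n) :
    Fintype.card {I : {I : Finset (Fin n) // I.card = 4} // z ∉ I.1} = (n - 1).choose 4 := by
  classical
  have hcongr : Fintype.card {I : {I : Finset (Fin n) // I.card = 4} // z ∉ I.1}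
      = Fintype.card {x // x ∈ powersetCard 4 ((univ : Finset (Fin n)).erase z)} := by
    apply Fintype.card_congr
    refine ⟨fun I => ⟨I.1.1, ?_⟩,
      fun J => ⟨⟨J.1, (mem_powersetCard.mp J.2).2⟩,
        fun h => (notMem_erase z univ) ((mem_powersetCard.mp J.2).1 h)⟩, ?_, ?_⟩
    · rw [mem_powersetCard]
      exact ⟨subset_erase.mpr ⟨subset_univ _, I.2⟩, I.1.2⟩
    · intro I; rfl
    · intro J; rfl
  rw [hcongr, Fintype.card_coe, card_powersetCard, card_erase_of_mem (mem_univ z),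
    card_univ, Fintype.card_fin]

private lemma KM_det (z : Fin n) :
    (KM z).det = (-1) ^ ((n - 1).choose 3) * 2 ^ ((n - 1).choose 4) := by
  classical
  have h := KEKM_det z
  rw [Matrix.det_mul, KE_det z, one_mul] at h
  rw [h, card_KIdx_mem, card_KIdx_not_mem]

end KeelAux

/-- The determinant of the matrix of intersection numbers of the Keel classes `[S_I]`
with the 1-cycles dual to the Kapranov basis elements `Δ_{I ∖ {n}}`,
with entry `min {0, 2 − |(I ∖ {n}) ∩ I′|}`, equals `(−1)^(C(n−1,3)) · 2^(C(n−1,4))`. -/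
theorem keel_kapranov_det (n : ℕ) (hn : 6 ≤ n) :
    Matrix.det (Matrix.of fun I I' : {I : Finset (Fin n) // I.card = 4} =>
        min (0 : ℚ) (2 - (((I.1.erase (⟨n - 1, by omega⟩ : Fin n)) ∩ I'.1).card : ℚ))) =
      (-1) ^ (Nat.choose (n - 1) 3) * 2 ^ (Nat.choose (n - 1) 4) := by
  exact KM_det (⟨n - 1, by omega⟩ : Fin n)
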